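/- The kill rule is confluent with itself: any overlap of two instances of the kill rule kill(f) \ G^F ⇔ f ∈ F | true, under the assumption that each state contains at most one kill(f) constraint per justification f, yields a joinable critical pair. -/
import Mathlib


variable {C J : Type*} [DecidableEq C] [DecidableEq J]

/-- Annotated constraints of CHR with justifications, including the reserved
`rem` and `kill` constraints. `user c F` is a (non-reserved) constraint `c`
annotated with justification set `F`; `rem c Fc F` remembers the removed
constraint `c^{Fc}` and is itself annotated with `F`; `kill f` requests
logical retraction of justification `f`. -/
inductive AC (C J : Type*) where
  | user : C → Finset J → AC C J
  | rem : C → Finset J → Finset J → AC C J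
  | kill : J → AC C J
deriving DecidableEq

/-- The kill rule: `kill(f) \ G^F ⇔ f ∈ F | true`, for non-reserved `G`. -/
def KillStep (S T : Multiset (AC C J)) : Prop :=
  ∃ (f : J) (c : C) (F : Finset J) (G : Multiset (AC C J)),
    f ∈ F ∧ S = AC.kill f ::ₘ AC.user c F ::ₘ G ∧ T = AC.kill f ::ₘ G

/-- The revive rule: `kill(f) \ rem(G^{F_c})^F ⇔ f ∈ F | G^{F_c}`. -/
def ReviveStep (S T : Multiset (AC C J)) : Prop :=
  ∃ (f : J) (c : C) (Fc F : Finset J) (G : Multiset (AC C J)),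
    f ∈ F ∧ S = AC.kill f ::ₘ AC.rem c Fc F ::ₘ G ∧
      T = AC.kill f ::ₘ AC.user c Fc ::ₘ G

/-- A state contains at most one `kill(f)` constraint per justification `f`. -/
def AtMostOneKill (S : Multiset (AC C J)) : Prop :=
  ∀ f : J, S.count (AC.kill f) ≤ 1

lemma killStep_of_mem {f : J} {c : C} {F : Finset J} {S : Multiset (AC C J)}
    (hf : f ∈ F) (hk : AC.kill f ∈ S) (hu : AC.user c F ∈ S) :
    KillStep S (S.erase (AC.user c F)) := by
  have hne : AC.kill f ≠ AC.user c F := by simp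
  have hk' : AC.kill f ∈ S.erase (AC.user c F) := Multiset.mem_erase_of_ne hne |>.mpr hk
  refine ⟨f, c, F, (S.erase (AC.user c F)).erase (AC.kill f), hf, ?_, ?_⟩
  · rw [Multiset.cons_swap, Multiset.cons_erase hk', Multiset.cons_erase hu]
  · rw [Multiset.cons_erase hk']

lemma killStep_T_eq {S T : Multiset (AC C J)} {f : J} {c : C} {F : Finset J}
    {G : Multiset (AC C J)}
    (hs : S = AC.kill f ::ₘ AC.user c F ::ₘ G) (ht : T = AC.kill f ::ₘ G) :
    T = S.erase (AC.user c F) := by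
  subst hs ht
  rw [Multiset.erase_cons_tail _ (by simp), Multiset.erase_cons_head]

/-- The kill rule is confluent with itself: under the assumption of at most one
`kill(f)` per justification, any critical pair arising from two applications of
the kill rule to an overlap state is joinable. -/
theorem kill_confluent_with_kill (S T₁ T₂ : Multiset (AC C J))
    (hS : AtMostOneKill S) (h₁ : KillStep S T₁) (h₂ : KillStep S T₂) :
    ∃ U₁ U₂ : Multiset (AC C J),
      Relation.ReflTransGen KillStep T₁ U₁ ∧
      Relation.ReflTransGen KillStep T₂ U₂ ∧ U₁ = U₂ := by
  obtain ⟨f₁, c₁, F₁, G₁, hf₁, hs₁, ht₁⟩ := h₁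
  obtain ⟨f₂, c₂, F₂, G₂, hf₂, hs₂, ht₂⟩ := h₂
  have e₁ : T₁ = S.erase (AC.user c₁ F₁) := killStep_T_eq hs₁ ht₁
  have e₂ : T₂ = S.erase (AC.user c₂ F₂) := killStep_T_eq hs₂ ht₂
  by_cases h : AC.user c₁ F₁ = AC.user c₂ F₂
  · exact ⟨T₁, T₂, .refl, .refl, by rw [e₁, e₂, h]⟩
  · have hk₂ : AC.kill f₂ ∈ S := by rw [hs₂]; simp
    have hu₂ : AC.user c₂ F₂ ∈ S := by rw [hs₂]; simp
    have hk₁ : AC.kill f₁ ∈ S := by rw [hs₁]; simp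
    have hu₁ : AC.user c₁ F₁ ∈ S := by rw [hs₁]; simp
    have hk₂' : AC.kill f₂ ∈ T₁ := by
      rw [e₁]; exact (Multiset.mem_erase_of_ne (by simp)).mpr hk₂
    have hu₂' : AC.user c₂ F₂ ∈ T₁ := by
      rw [e₁]; exact (Multiset.mem_erase_of_ne (Ne.symm h)).mpr hu₂
    have hk₁' : AC.kill f₁ ∈ T₂ := by
      rw [e₂]; exact (Multiset.mem_erase_of_ne (by simp)).mpr hk₁
    have hu₁' : AC.user c₁ F₁ ∈ T₂ := by
      rw [e₂]; exact (Multiset.mem_erase_of_ne h).mpr hu₁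
    refine ⟨T₁.erase (AC.user c₂ F₂), T₂.erase (AC.user c₁ F₁),
      Relation.ReflTransGen.single (killStep_of_mem hf₂ hk₂' hu₂'),
      Relation.ReflTransGen.single (killStep_of_mem hf₁ hk₁' hu₁'), ?_⟩
    rw [e₁, e₂, Multiset.erase_comm]
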